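/- If x ≠ y at a positive fixed point of F, then L = η²θ/(θ²+x+y+u+v) satisfies the quadratic equation (θ-1)²(θ+2)ηL² - (1+η)(θ²-1)L + θ = 0. -/

import Mathlib

/-- If x ≠ y at a positive fixed point of F, then L = η²θ/(θ²+x+y+u+v)
satisfies (θ-1)²(θ+2)ηL² - (1+η)(θ²-1)L + θ = 0. -/
theorem L_quadratic (θ η x y u v : ℝ)
    (hθ : 0 < θ) (hθ1 : θ ≠ 1) (hη : 0 < η)
    (hx : 0 < x) (hy : 0 < y) (hu : 0 < u) (hv : 0 < v)
    (hxy : x ≠ y)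
    (e1 : x = η^2 * (θ^2 + θ^2 * x + y + θ * u + v) / (θ^2 + x + y + u + v))
    (e2 : y = η^2 * (θ^2 + x + θ^2 * y + u + θ * v) / (θ^2 + x + y + u + v))
    (e3 : u = η^3 * (θ^2 + θ * x + y + θ^2 * u + v) / (θ^2 + x + y + u + v))
    (e4 : v = η^3 * (θ^2 + x + θ * y + u + θ^2 * v) / (θ^2 + x + y + u + v)) :
    let L := η^2 * θ / (θ^2 + x + y + u + v)
    (θ - 1)^2 * (θ + 2) * η * L^2 - (1 + η) * (θ^2 - 1) * L + θ = 0 := by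
  intro L
  have hS : (0:ℝ) < θ^2 + x + y + u + v := by positivity
  have hS' : θ^2 + x + y + u + v ≠ 0 := ne_of_gt hS
  set S : ℝ := θ^2 + x + y + u + v with hSdef
  rw [eq_div_iff hS'] at e1 e2 e3 e4
  have A : (S - η^2 * (θ^2 - 1)) * (x - y) = η^2 * (θ - 1) * (u - v) := by
    linear_combination e1 - e2
  have B : (S - η^3 * (θ^2 - 1)) * (u - v) = η^3 * (θ - 1) * (x - y) := by
    linear_combination e3 - e4
  have ha : x - y ≠ 0 := sub_ne_zero.mpr hxy
  have hθ1' : θ - 1 ≠ 0 := sub_ne_zero.mpr hθ1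
  have hb : u - v ≠ 0 := by
    intro h
    apply ha
    rw [h, mul_zero] at B
    rcases mul_eq_zero.mp B.symm with h' | h'
    · exact absurd h' (mul_ne_zero (by positivity) hθ1')
    · exact h'
  have K : (S - η^2 * (θ^2 - 1)) * (S - η^3 * (θ^2 - 1)) = η^5 * (θ - 1)^2 := by
    have hab : (x - y) * (u - v) ≠ 0 := mul_ne_zero ha hb
    have h5 : (S - η^2 * (θ^2 - 1)) * (S - η^3 * (θ^2 - 1)) * ((x - y) * (u - v))
        = η^5 * (θ - 1)^2 * ((x - y) * (u - v)) := by
      calc (S - η^2 * (θ^2 - 1)) * (S - η^3 * (θ^2 - 1)) * ((x - y) * (u - v))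
          = ((S - η^2 * (θ^2 - 1)) * (x - y)) * ((S - η^3 * (θ^2 - 1)) * (u - v)) := by ring
        _ = (η^2 * (θ - 1) * (u - v)) * (η^3 * (θ - 1) * (x - y)) := by rw [A, B]
        _ = η^5 * (θ - 1)^2 * ((x - y) * (u - v)) := by ring
    exact mul_right_cancel₀ hab h5
  show (θ - 1)^2 * (θ + 2) * η * (η^2 * θ / S)^2 - (1 + η) * (θ^2 - 1) * (η^2 * θ / S) + θ = 0
  field_simp
  linear_combination θ * K
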